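/- arXiv:1901.09809 — 2 statements merged into one kernel-verified Lean document; each statement's English description precedes it below -/
import Mathlib

section
/- Let z : [-D, 0] × [0, ∞) → ℝ be a C¹ solution of the transport equation z_t(x,t) = -z_x(x,t) with boundary condition z(-D, t) = 0 for all t ≥ 0, where D > 0. Define V₁(t) = ∫_{-D}^{0} e^{-mx} z_x(x,t)² dx for m > 0. Then V₁'(t) = -z_x(0,t)² - m ∫_{-D}^{0} e^{-mx} z_x(x,t)² dx; in particular V₁'(t) ≤ -m V₁(t). -/
open MeasureTheory intervalIntegral Metric Set

/-- Differentiation under the interval integral sign, for continuous integrand and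
continuous derivative. -/
lemma stmt_9_dui (a b : ℝ) (F F' : ℝ → ℝ → ℝ)
    (hF : Continuous fun p : ℝ × ℝ => F p.1 p.2)
    (hF' : Continuous fun p : ℝ × ℝ => F' p.1 p.2)
    (hd : ∀ x τ : ℝ, HasDerivAt (fun τ => F x τ) (F' x τ) τ) (t : ℝ) :
    HasDerivAt (fun τ => ∫ x in a..b, F x τ) (∫ x in a..b, F' x t) t := by
  obtain ⟨C, hC⟩ := ((isCompact_Icc (a := min a b) (b := max a b)).prod
    (isCompact_Icc (a := t - 1) (b := t + 1))).exists_bound_of_continuousOn hF'.continuousOn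
  have key := intervalIntegral.hasDerivAt_integral_of_dominated_loc_of_deriv_le
    (μ := volume) (F := fun τ x => F x τ) (F' := fun τ x => F' x τ) (x₀ := t)
    (bound := fun _ => C) (a := a) (b := b) (s := ball t 1) (ball_mem_nhds t one_pos)
    (Filter.Eventually.of_forall fun τ =>
      (hF.comp (continuous_id.prodMk continuous_const)).aestronglyMeasurable)
    ((hF.comp (continuous_id.prodMk continuous_const)).intervalIntegrable a b)
    ((hF'.comp (continuous_id.prodMk continuous_const)).aestronglyMeasurable)
    (Filter.Eventually.of_forall fun x hx τ hτ => by
      apply hC (x, τ)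
      constructor
      · exact Ioc_subset_Icc_self hx
      · rw [Real.ball_eq_Ioo] at hτ
        exact Ioo_subset_Icc_self hτ)
    (intervalIntegrable_const)
    (Filter.Eventually.of_forall fun x hx τ hτ => hd x τ)
  exact key.2

theorem stmt_9 (D m : ℝ) (hD : 0 < D) (hm : 0 < m)
    (z zx zt zxx zxt : ℝ → ℝ → ℝ)
    (hzx : ∀ x t : ℝ, HasDerivAt (fun ξ => z ξ t) (zx x t) x)
    (hzt : ∀ x t : ℝ, HasDerivAt (fun τ => z x τ) (zt x t) t)
    (hzxx : ∀ x t : ℝ, HasDerivAt (fun ξ => zx ξ t) (zxx x t) x)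
    (hzxt : ∀ x t : ℝ, HasDerivAt (fun τ => zx x τ) (zxt x t) t)
    (hzxcont : Continuous fun p : ℝ × ℝ => zx p.1 p.2)
    (hzxtcont : Continuous fun p : ℝ × ℝ => zxt p.1 p.2)
    (hpde : ∀ x t : ℝ, zt x t = -zx x t)
    (hbc : ∀ t : ℝ, 0 ≤ t → z (-D) t = 0) :
    ∀ t : ℝ, 0 ≤ t →
      HasDerivAt (fun τ => ∫ x in (-D)..0, Real.exp (-m * x) * (zx x τ) ^ 2)
        (-(zx 0 t) ^ 2 - m * ∫ x in (-D)..0, Real.exp (-m * x) * (zx x t) ^ 2) t ∧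
      -(zx 0 t) ^ 2 - m * (∫ x in (-D)..0, Real.exp (-m * x) * (zx x t) ^ 2) ≤
        -m * ∫ x in (-D)..0, Real.exp (-m * x) * (zx x t) ^ 2 := by
  -- continuity of slices of zx, zxt
  have hzxc1 : ∀ t : ℝ, Continuous fun x => zx x t := fun t =>
    hzxcont.comp (continuous_id.prodMk continuous_const)
  have hzxtc1 : ∀ t : ℝ, Continuous fun x => zxt x t := fun t =>
    hzxtcont.comp (continuous_id.prodMk continuous_const)
  -- Step 1: FTC in x
  have ftc : ∀ a x t : ℝ, z x t - z a t = ∫ ξ in a..x, zx ξ t := by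
    intro a x t
    rw [intervalIntegral.integral_eq_sub_of_hasDerivAt
      (fun ξ _ => hzx ξ t) ((hzxc1 t).intervalIntegrable a x)]
  -- Step 2: differentiate in t
  have step2 : ∀ a x t : ℝ, zt x t - zt a t = ∫ ξ in a..x, zxt ξ t := by
    intro a x t
    have h1 : HasDerivAt (fun τ => z x τ - z a τ) (zt x t - zt a t) t :=
      (hzt x t).sub (hzt a t)
    have h2 : HasDerivAt (fun τ => ∫ ξ in a..x, zx ξ τ) (∫ ξ in a..x, zxt ξ t) t :=
      stmt_9_dui a x zx zxt hzxcont hzxtcont (fun ξ τ => hzxt ξ τ) t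
    have heq : (fun τ => z x τ - z a τ) = fun τ => ∫ ξ in a..x, zx ξ τ := by
      funext τ; exact ftc a x τ
    rw [heq] at h1
    exact h1.unique h2
  -- Step 3: mixed partial identity zxt = -zxx
  have hmix : ∀ x t : ℝ, zxt x t = -zxx x t := by
    intro x t
    have key : ∀ y : ℝ, (∫ ξ in (0:ℝ)..y, zxt ξ t) = -zx y t + zx 0 t := by
      intro y
      rw [← step2 0 y t, hpde, hpde]; ring
    have hR : HasDerivAt (fun y => ∫ ξ in (0:ℝ)..y, zxt ξ t) (zxt x t) x :=
      intervalIntegral.integral_hasDerivAt_right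
        ((hzxtc1 t).intervalIntegrable 0 x)
        ((hzxtc1 t).stronglyMeasurableAtFilter _ _)
        (hzxtc1 t).continuousAt
    have hL : HasDerivAt (fun y => -zx y t + zx 0 t) (-zxx x t) x := by
      simpa using ((hzxx x t).neg).add_const (zx 0 t)
    have heq : (fun y => ∫ ξ in (0:ℝ)..y, zxt ξ t) = fun y => -zx y t + zx 0 t := funext key
    rw [heq] at hR
    exact hR.unique hL
  -- Step 4: boundary value zx (-D) t = 0 for t ≥ 0
  have hbd : ∀ t : ℝ, 0 ≤ t → zx (-D) t = 0 := by
    have hpos : ∀ s : ℝ, 0 < s → zx (-D) s = 0 := by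
      intro s hs
      have hz0 : (fun τ => z (-D) τ) =ᶠ[nhds s] fun _ => (0:ℝ) := by
        filter_upwards [Ioi_mem_nhds hs] with τ hτ
        exact hbc τ (le_of_lt hτ)
      have hd0 : HasDerivAt (fun τ => z (-D) τ) 0 s :=
        (hasDerivAt_const s (0:ℝ)).congr_of_eventuallyEq hz0
      have := (hzt (-D) s).unique hd0
      have hp := hpde (-D) s
      linarith [hp ▸ this]
    intro t ht
    rcases eq_or_lt_of_le ht with h | h
    · -- t = 0 : use continuity from the right
      subst h
      have hc : ContinuousAt (fun s => zx (-D) s) 0 :=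
        ((hzxcont.comp (continuous_const.prodMk continuous_id)).continuousAt)
      have h1 : Filter.Tendsto (fun s => zx (-D) s) (nhdsWithin 0 (Ioi 0)) (nhds (zx (-D) 0)) :=
        hc.continuousWithinAt.tendsto
      have h2 : Filter.Tendsto (fun s => zx (-D) s) (nhdsWithin 0 (Ioi 0)) (nhds 0) := by
        apply Filter.Tendsto.congr' _ tendsto_const_nhds
        filter_upwards [self_mem_nhdsWithin] with s hs
        exact (hpos s hs).symm
      exact tendsto_nhds_unique h1 h2
    · exact hpos t h
  intro t ht
  -- the continuous integrand and its t-derivative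
  set I := ∫ x in (-D)..0, Real.exp (-m * x) * (zx x t) ^ 2 with hI
  have hFcont : Continuous fun p : ℝ × ℝ => Real.exp (-m * p.1) * (zx p.1 p.2) ^ 2 :=
    ((Real.continuous_exp.comp (continuous_const.mul continuous_fst))).mul (hzxcont.pow 2)
  have hF'cont : Continuous fun p : ℝ × ℝ =>
      Real.exp (-m * p.1) * (2 * zx p.1 p.2 * zxt p.1 p.2) :=
    ((Real.continuous_exp.comp (continuous_const.mul continuous_fst))).mul
      ((continuous_const.mul hzxcont).mul hzxtcont)
  have hdF : ∀ x τ : ℝ, HasDerivAt (fun τ => Real.exp (-m * x) * (zx x τ) ^ 2)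
      (Real.exp (-m * x) * (2 * zx x τ * zxt x τ)) τ := by
    intro x τ
    have := ((hzxt x τ).pow 2).const_mul (Real.exp (-m * x))
    simpa [mul_comm, mul_assoc, mul_left_comm] using this
  have hderiv : HasDerivAt (fun τ => ∫ x in (-D)..0, Real.exp (-m * x) * (zx x τ) ^ 2)
      (∫ x in (-D)..0, Real.exp (-m * x) * (2 * zx x t * zxt x t)) t :=
    stmt_9_dui (-D) 0 _ _ hFcont hF'cont hdF t
  -- integration by parts: compute the integral of the derivative
  have hGderiv : ∀ x : ℝ, HasDerivAt (fun ξ => Real.exp (-m * ξ) * (zx ξ t) ^ 2)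
      (-(m * (Real.exp (-m * x) * (zx x t) ^ 2)) - Real.exp (-m * x) * (2 * zx x t * zxt x t)) x := by
    intro x
    have he : HasDerivAt (fun ξ => Real.exp (-m * ξ)) (-m * Real.exp (-m * x)) x := by
      simpa [mul_comm] using ((hasDerivAt_id x).const_mul (-m)).exp
    have hz2 : HasDerivAt (fun ξ => (zx ξ t) ^ 2) (2 * zx x t * zxx x t) x := by
      simpa using (hzxx x t).fun_pow 2
    have : HasDerivAt (fun ξ => Real.exp (-m * ξ) * (zx ξ t) ^ 2)
        (-m * Real.exp (-m * x) * zx x t ^ 2 + Real.exp (-m * x) * (2 * zx x t * zxx x t)) x :=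
      he.fun_mul hz2
    have hmx := hmix x t
    convert this using 1
    rw [show zxx x t = -zxt x t by linarith [hmix x t]]
    ring
  have hGint : (∫ x in (-D)..0,
      (-(m * (Real.exp (-m * x) * (zx x t) ^ 2)) - Real.exp (-m * x) * (2 * zx x t * zxt x t)))
      = (zx 0 t) ^ 2 := by
    rw [intervalIntegral.integral_eq_sub_of_hasDerivAt (fun x _ => hGderiv x)]
    · simp [hbd t ht]
    · apply Continuous.intervalIntegrable
      exact ((continuous_const.mul ((Real.continuous_exp.comp (continuous_const.mul continuous_id)).mul
        ((hzxc1 t).pow 2))).neg).sub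
        ((Real.continuous_exp.comp (continuous_const.mul continuous_id)).mul
          ((continuous_const.mul (hzxc1 t)).mul (hzxtc1 t)))
  have hintegrable1 : IntervalIntegrable (fun x => Real.exp (-m * x) * (zx x t) ^ 2) volume (-D) 0 :=
    (((Real.continuous_exp.comp (continuous_const.mul continuous_id)).mul
      ((hzxc1 t).pow 2))).intervalIntegrable _ _
  have hintegrable2 : IntervalIntegrable (fun x => Real.exp (-m * x) * (2 * zx x t * zxt x t)) volume (-D) 0 :=
    (((Real.continuous_exp.comp (continuous_const.mul continuous_id)).mul
      ((continuous_const.mul (hzxc1 t)).mul (hzxtc1 t)))).intervalIntegrable _ _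
  have hval : (∫ x in (-D)..0, Real.exp (-m * x) * (2 * zx x t * zxt x t))
      = -(zx 0 t) ^ 2 - m * I := by
    have hsplit : (∫ x in (-D)..0,
        (-(m * (Real.exp (-m * x) * (zx x t) ^ 2)) - Real.exp (-m * x) * (2 * zx x t * zxt x t)))
        = (∫ x in (-D)..0, -(m * (Real.exp (-m * x) * (zx x t) ^ 2)))
          - ∫ x in (-D)..0, Real.exp (-m * x) * (2 * zx x t * zxt x t) := by
      exact intervalIntegral.integral_sub ((hintegrable1.const_mul m).neg) hintegrable2
    have hleft : (∫ x in (-D)..0, -(m * (Real.exp (-m * x) * (zx x t) ^ 2))) = -(m * I) := by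
      rw [intervalIntegral.integral_neg, intervalIntegral.integral_const_mul]
    rw [hsplit, hleft] at hGint
    linarith
  constructor
  · rw [hval] at hderiv; exact hderiv
  · have := sq_nonneg (zx 0 t)
    linarith
end

section
/- Let p : [0, T₁] → ℝ satisfy p(t) = e^{-t} p(0) + Δ ∫_0^t e^{-(t-s)} g(s) ds where |g(s)| ≤ M' for all s, p(0) > 0, and T₁ ≤ T̄. If |Δ| ≤ ε / (M'(e^{T̄} − 1)) for some 0 < ε < p(0), then p(t) ≥ (p(0) − ε) e^{-t} > 0 for all t ∈ [0, T₁]. -/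
theorem stmt_13 (T₁ Tbar Δ M' ε : ℝ) (hT₁ : 0 < T₁) (hTbar : T₁ ≤ Tbar)
    (p g : ℝ → ℝ) (hg : Continuous g) (hM' : 0 < M')
    (hgbd : ∀ s : ℝ, |g s| ≤ M')
    (hp : ∀ t ∈ Set.Icc 0 T₁,
      p t = Real.exp (-t) * p 0 + Δ * ∫ s in (0:ℝ)..t, Real.exp (-(t - s)) * g s)
    (hp0 : 0 < p 0) (hε : 0 < ε) (hεp : ε < p 0)
    (hΔ : |Δ| ≤ ε / (M' * (Real.exp Tbar - 1))) :
    ∀ t ∈ Set.Icc 0 T₁, (p 0 - ε) * Real.exp (-t) ≤ p t ∧ 0 < p t := by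
  have hTb : 0 < Tbar := lt_of_lt_of_le hT₁ hTbar
  have hE : 0 < Real.exp Tbar - 1 := by
    have := Real.add_one_lt_exp (ne_of_gt hTb)
    linarith
  intro t ht
  obtain ⟨ht0, ht1⟩ := ht
  have htT : t ≤ Tbar := le_trans ht1 hTbar
  have hint1 : IntervalIntegrable (fun s => Real.exp (-(t - s)) * g s) MeasureTheory.volume 0 t := by
    apply Continuous.intervalIntegrable
    exact ((Real.continuous_exp.comp (by continuity)).mul hg)
  have hint2 : IntervalIntegrable (fun s => Real.exp (-(t - s)) * M') MeasureTheory.volume 0 t := by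
    apply Continuous.intervalIntegrable
    exact ((Real.continuous_exp.comp (by continuity)).mul continuous_const)
  have habs : |∫ s in (0:ℝ)..t, Real.exp (-(t - s)) * g s|
      ≤ ∫ s in (0:ℝ)..t, |Real.exp (-(t - s)) * g s| :=
    intervalIntegral.abs_integral_le_integral_abs ht0
  have hmono : (∫ s in (0:ℝ)..t, |Real.exp (-(t - s)) * g s|)
      ≤ ∫ s in (0:ℝ)..t, Real.exp (-(t - s)) * M' := by
    apply intervalIntegral.integral_mono_on ht0 hint1.abs hint2
    intro s _
    rw [abs_mul, abs_of_pos (Real.exp_pos _)]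
    exact mul_le_mul_of_nonneg_left (hgbd s) (Real.exp_pos _).le
  have hcalc : (∫ s in (0:ℝ)..t, Real.exp (-(t - s)) * M') = M' * (1 - Real.exp (-t)) := by
    have heq : (fun s => Real.exp (-(t - s)) * M') = fun s => (M' * Real.exp (-t)) * Real.exp s := by
      funext s
      rw [show -(t - s) = -t + s by ring, Real.exp_add]; ring
    rw [heq, intervalIntegral.integral_const_mul, integral_exp]
    have h1 : Real.exp (-t) * Real.exp t = 1 := by
      rw [← Real.exp_add]; simp
    simp only [Real.exp_zero]
    nlinarith [h1]
  have hI : |∫ s in (0:ℝ)..t, Real.exp (-(t - s)) * g s| ≤ M' * (1 - Real.exp (-t)) := by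
    rw [← hcalc]; exact le_trans habs hmono
  -- (1 - e^{-t}) ≤ (e^{Tbar} - 1) * e^{-t}
  have hkey : 1 - Real.exp (-t) ≤ (Real.exp Tbar - 1) * Real.exp (-t) := by
    have h1 : Real.exp (-t) * Real.exp t = 1 := by rw [← Real.exp_add]; simp
    have h2 : Real.exp t ≤ Real.exp Tbar := Real.exp_le_exp.mpr htT
    nlinarith [Real.exp_pos (-t)]
  have hΔI : |Δ * ∫ s in (0:ℝ)..t, Real.exp (-(t - s)) * g s| ≤ ε * Real.exp (-t) := by
    rw [abs_mul]
    have h1 : |Δ| * |∫ s in (0:ℝ)..t, Real.exp (-(t - s)) * g s|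
        ≤ (ε / (M' * (Real.exp Tbar - 1))) * (M' * (1 - Real.exp (-t))) := by
      apply mul_le_mul hΔ hI (abs_nonneg _)
      positivity
    refine le_trans h1 ?_
    rw [div_mul_eq_mul_div, div_le_iff₀ (by positivity)]
    have := mul_le_mul_of_nonneg_left hkey hε.le
    nlinarith [Real.exp_pos (-t), hε, hM', hE]
  have hpt := hp t ⟨ht0, ht1⟩
  have habs' := abs_le.mp hΔI
  constructor
  · rw [hpt]; nlinarith [habs'.1]
  · rw [hpt]
    have : 0 < (p 0 - ε) * Real.exp (-t) := mul_pos (by linarith) (Real.exp_pos _)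
    nlinarith [habs'.1]
end
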